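/- Let f, g : [0,1] → ℝ be continuous functions. Then the upper box-counting dimension of the graph of the sum f+g satisfies dim_B̄ G(f+g) ≤ max{dim_B̄ G(f), dim_B̄ G(g)}. -/

import Mathlib

open Set Filter Metric

noncomputable def coverNum {α : Type*} [PseudoMetricSpace α] (F : Set α) (δ : ℝ) : ℕ :=
  sInf {n : ℕ | ∃ t : Finset α, t.card = n ∧ F ⊆ ⋃ p ∈ t, Metric.closedBall p δ}

noncomputable def upperBoxDim {α : Type*} [PseudoMetricSpace α] (F : Set α) : ℝ :=
  Filter.limsup (fun δ : ℝ => Real.log (coverNum F δ) / -Real.log δ)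
    (nhdsWithin (0 : ℝ) (Set.Ioi 0))

noncomputable def lowerBoxDim {α : Type*} [PseudoMetricSpace α] (F : Set α) : ℝ :=
  Filter.liminf (fun δ : ℝ => Real.log (coverNum F δ) / -Real.log δ)
    (nhdsWithin (0 : ℝ) (Set.Ioi 0))

/-- Graph of `f` over the set `X`. -/
def fnGraphOn (f : ℝ → ℝ) (X : Set ℝ) : Set (ℝ × ℝ) := (fun x => (x, f x)) '' X

/-- Graph of `f` over `[0,1]`. -/
def G (f : ℝ → ℝ) : Set (ℝ × ℝ) := fnGraphOn f (Set.Icc 0 1)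

/-! ### Auxiliary machinery -/

namespace BoxDimAux

/-- The `i`-th column of width `δ`, intersected with `[0,1]`. -/
def ecol (δ : ℝ) (i : ℕ) : Set ℝ := Icc ((i : ℝ) * δ) (min (((i : ℝ) + 1) * δ) 1)

/-- Oscillation of `h` over the `i`-th column. -/
noncomputable def osc (h : ℝ → ℝ) (δ : ℝ) (i : ℕ) : ℝ :=
  sSup (h '' ecol δ i) - sInf (h '' ecol δ i)

lemma coverNum_le_card {α : Type*} [PseudoMetricSpace α] {F : Set α} {δ : ℝ} {t : Finset α}
    (h : F ⊆ ⋃ p ∈ t, Metric.closedBall p δ) : coverNum F δ ≤ t.card :=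
  Nat.sInf_le ⟨t, rfl, h⟩

lemma ecol_subset_unit {δ : ℝ} (hδ0 : 0 < δ) (i : ℕ) : ecol δ i ⊆ Icc 0 1 := by
  intro x hx
  obtain ⟨h1, h2⟩ := hx
  constructor
  · have : (0:ℝ) ≤ (i : ℝ) * δ := by positivity
    linarith
  · exact le_trans h2 (min_le_right _ _)

lemma left_mem_ecol {δ : ℝ} (hδ0 : 0 < δ) {i : ℕ} (hi : i < ⌈1/δ⌉₊) :
    (i : ℝ) * δ ∈ ecol δ i := by
  have h1 : (i : ℝ) < 1/δ := Nat.lt_ceil.mp hi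
  have h2 : (i : ℝ) * δ < 1 := by
    have := mul_lt_mul_of_pos_right h1 hδ0
    rwa [div_mul_cancel₀ _ (ne_of_gt hδ0)] at this
  refine ⟨le_refl _, le_min ?_ h2.le⟩
  nlinarith

lemma ecol_lo_le_hi {δ : ℝ} (hδ0 : 0 < δ) {i : ℕ} (hi : i < ⌈1/δ⌉₊) :
    (i : ℝ) * δ ≤ min (((i : ℝ) + 1) * δ) 1 := (left_mem_ecol hδ0 hi).2

lemma mem_union_ecol {δ : ℝ} (hδ0 : 0 < δ) (hδ1 : δ < 1) {x : ℝ} (hx : x ∈ Icc (0:ℝ) 1) :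
    ∃ i < ⌈1/δ⌉₊, x ∈ ecol δ i := by
  obtain ⟨hx0, hx1⟩ := hx
  have hm1 : 1 ≤ ⌈1/δ⌉₊ := by
    apply Nat.one_le_ceil_iff.mpr
    positivity
  rcases eq_or_lt_of_le hx1 with h1 | h1
  · -- x = 1, use the last column
    refine ⟨⌈1/δ⌉₊ - 1, by omega, ?_⟩
    have hlt : ((⌈1/δ⌉₊ - 1 : ℕ) : ℝ) < 1/δ := Nat.lt_ceil.mp (by omega)
    have hcast : ((⌈1/δ⌉₊ - 1 : ℕ) : ℝ) + 1 = (⌈1/δ⌉₊ : ℝ) := by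
      push_cast [Nat.cast_sub hm1]; ring
    have hge : 1 ≤ (⌈1/δ⌉₊ : ℝ) * δ := by
      have := Nat.le_ceil (1/δ)
      calc (1:ℝ) = (1/δ) * δ := by field_simp
      _ ≤ (⌈1/δ⌉₊ : ℝ) * δ := by apply mul_le_mul_of_nonneg_right this hδ0.le
    constructor
    · rw [h1]
      have := mul_lt_mul_of_pos_right hlt hδ0
      rw [div_mul_cancel₀ _ (ne_of_gt hδ0)] at this
      linarith
    · rw [h1]
      apply le_min _ (le_refl _)
      rw [hcast]
      linarith
  · refine ⟨⌊x/δ⌋₊, ?_, ?_, ?_⟩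
    · rw [Nat.floor_lt (by positivity)]
      have hxd : x/δ < 1/δ := by gcongr
      exact hxd.trans_le (Nat.le_ceil _)
    · have := Nat.floor_le (by positivity : (0:ℝ) ≤ x/δ)
      calc ((⌊x/δ⌋₊ : ℝ)) * δ ≤ (x/δ) * δ := mul_le_mul_of_nonneg_right this hδ0.le
      _ = x := by field_simp
    · apply le_min ?_ hx1
      have := Nat.lt_floor_add_one (x/δ)
      calc x = (x/δ) * δ := by field_simp
      _ ≤ ((⌊x/δ⌋₊ : ℝ) + 1) * δ := mul_le_mul_of_nonneg_right this.le hδ0.le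

lemma image_ecol {h : ℝ → ℝ} (hh : ContinuousOn h (Icc 0 1)) {δ : ℝ} (hδ0 : 0 < δ) {i : ℕ}
    (hi : i < ⌈1/δ⌉₊) :
    h '' ecol δ i = Icc (sInf (h '' ecol δ i)) (sSup (h '' ecol δ i)) :=
  ContinuousOn.image_Icc (ecol_lo_le_hi hδ0 hi) (hh.mono (ecol_subset_unit hδ0 i))

lemma osc_nonneg {h : ℝ → ℝ} (hh : ContinuousOn h (Icc 0 1)) {δ : ℝ} (hδ0 : 0 < δ) {i : ℕ}
    (hi : i < ⌈1/δ⌉₊) : 0 ≤ osc h δ i := by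
  have hmem : h ((i:ℝ)*δ) ∈ h '' ecol δ i := mem_image_of_mem h (left_mem_ecol hδ0 hi)
  rw [image_ecol hh hδ0 hi] at hmem
  have := hmem.1; have := hmem.2
  unfold osc; linarith

lemma exists_cover {h : ℝ → ℝ} (hh : ContinuousOn h (Icc 0 1)) {δ : ℝ}
    (hδ0 : 0 < δ) (hδ1 : δ < 1) :
    ∃ t : Finset (ℝ × ℝ), (G h ⊆ ⋃ p ∈ t, Metric.closedBall p δ) ∧
      (t.card : ℝ) ≤ ∑ i ∈ Finset.range ⌈1/δ⌉₊, (2 + osc h δ i / (2*δ)) := by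
  classical
  have h2δ : (0:ℝ) < 2*δ := by linarith
  set m := ⌈1/δ⌉₊ with hmdef
  set k : ℕ → ℕ := fun i => ⌈osc h δ i / (2*δ)⌉₊ + 1 with hkdef
  refine ⟨(Finset.range m).biUnion (fun i =>
      (Finset.range (k i)).image
        (fun j : ℕ => ((i:ℝ)*δ, sInf (h '' ecol δ i) + δ + 2*δ*(j:ℝ)))), ?_, ?_⟩
  · intro p hp
    simp only [G, fnGraphOn, Set.mem_image] at hp
    obtain ⟨x, hx, rfl⟩ := hp
    obtain ⟨i, hi, hxe⟩ := mem_union_ecol hδ0 hδ1 hx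
    set a := sInf (h '' ecol δ i) with hadef
    have himg : h x ∈ Icc a (sSup (h '' ecol δ i)) := by
      rw [← image_ecol hh hδ0 hi]; exact mem_image_of_mem h hxe
    have hv0 : 0 ≤ h x - a := by linarith [himg.1]
    have hosc : h x - a ≤ osc h δ i := by
      have := himg.2; unfold a; unfold osc; linarith
    set j := ⌊(h x - a)/(2*δ)⌋₊ with hjdef
    have hjk : j < k i := by
      have h1 : (j:ℝ) ≤ (h x - a)/(2*δ) := Nat.floor_le (div_nonneg hv0 h2δ.le)
      have h2 : (h x - a)/(2*δ) ≤ osc h δ i/(2*δ) := by gcongr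
      have h3 : (j:ℝ) ≤ ((⌈osc h δ i/(2*δ)⌉₊ : ℕ) : ℝ) := le_trans (h1.trans h2) (Nat.le_ceil _)
      have h4 := Nat.cast_le.mp h3
      show j < ⌈osc h δ i / (2*δ)⌉₊ + 1
      omega
    have hf1 : 2*δ*(j:ℝ) ≤ h x - a := by
      have h1 : (j:ℝ) ≤ (h x - a)/(2*δ) := Nat.floor_le (div_nonneg hv0 h2δ.le)
      rw [le_div_iff₀ h2δ] at h1; linarith
    have hf2 : h x - a < 2*δ*(j:ℝ) + 2*δ := by
      have h1 : (h x - a)/(2*δ) < (j:ℝ) + 1 := Nat.lt_floor_add_one _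
      rw [div_lt_iff₀ h2δ] at h1; linarith
    refine Set.mem_iUnion₂.mpr ⟨((i:ℝ)*δ, a + δ + 2*δ*j), ?_, ?_⟩
    · rw [Finset.mem_biUnion]
      refine ⟨i, Finset.mem_range.mpr hi, ?_⟩
      exact Finset.mem_image_of_mem _ (Finset.mem_range.mpr hjk)
    · rw [mem_closedBall, Prod.dist_eq]
      dsimp only
      apply max_le
      · rw [Real.dist_eq, abs_le]
        obtain ⟨he1, he2⟩ := hxe
        have he3 : x ≤ ((i:ℝ)+1)*δ := le_trans he2 (min_le_left _ _)
        constructor <;> nlinarith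
      · rw [Real.dist_eq, abs_le]
        constructor <;> nlinarith
  · have hcard : ((Finset.range m).biUnion (fun i =>
        (Finset.range (k i)).image
          (fun j : ℕ => ((i:ℝ)*δ, sInf (h '' ecol δ i) + δ + 2*δ*(j:ℝ))))).card
        ≤ ∑ i ∈ Finset.range m, k i := by
      refine le_trans Finset.card_biUnion_le (Finset.sum_le_sum fun i _ => ?_)
      exact le_trans Finset.card_image_le (by simp)
    calc (((Finset.range m).biUnion _).card : ℝ)
        ≤ ((∑ i ∈ Finset.range m, k i : ℕ) : ℝ) := by exact_mod_cast hcard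
      _ ≤ ∑ i ∈ Finset.range m, (2 + osc h δ i/(2*δ)) := by
          push_cast
          refine Finset.sum_le_sum fun i hi => ?_
          have h0 : 0 ≤ osc h δ i/(2*δ) :=
            div_nonneg (osc_nonneg hh hδ0 (Finset.mem_range.mp hi)) h2δ.le
          have := Nat.ceil_lt_add_one h0
          have hk : ((k i : ℕ) : ℝ) = (⌈osc h δ i / (2*δ)⌉₊ : ℝ) + 1 := by
            show ((⌈osc h δ i / (2*δ)⌉₊ + 1 : ℕ) : ℝ) = _; push_cast; ring
          linarith

lemma coverSet_nonempty {h : ℝ → ℝ} (hh : ContinuousOn h (Icc 0 1)) {δ : ℝ}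
    (hδ0 : 0 < δ) (hδ1 : δ < 1) :
    {n : ℕ | ∃ t : Finset (ℝ × ℝ), t.card = n ∧ G h ⊆ ⋃ p ∈ t, Metric.closedBall p δ}.Nonempty := by
  obtain ⟨t, ht, -⟩ := exists_cover hh hδ0 hδ1
  exact ⟨t.card, t, rfl, ht⟩

lemma one_le_coverNum {h : ℝ → ℝ} (hh : ContinuousOn h (Icc 0 1)) {δ : ℝ}
    (hδ0 : 0 < δ) (hδ1 : δ < 1) : 1 ≤ coverNum (G h) δ := by
  rcases Nat.eq_zero_or_pos (coverNum (G h) δ) with h0 | h1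
  · exfalso
    have hmem := Nat.sInf_mem (coverSet_nonempty hh hδ0 hδ1)
    rw [show sInf _ = coverNum (G h) δ from rfl, h0] at hmem
    obtain ⟨t, htc, hcov⟩ := hmem
    have ht : t = ∅ := Finset.card_eq_zero.mp htc
    have : ((0:ℝ), h 0) ∈ G h := ⟨0, by constructor <;> norm_num, rfl⟩
    have := hcov this
    simp [ht] at this
  · exact h1

lemma coverNum_le_sum {h : ℝ → ℝ} (hh : ContinuousOn h (Icc 0 1)) {δ : ℝ}
    (hδ0 : 0 < δ) (hδ1 : δ < 1) :
    (coverNum (G h) δ : ℝ) ≤ ∑ i ∈ Finset.range ⌈1/δ⌉₊, (2 + osc h δ i / (2*δ)) := by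
  obtain ⟨t, hcov, hcard⟩ := exists_cover hh hδ0 hδ1
  exact le_trans (by exact_mod_cast coverNum_le_card hcov) hcard

lemma sum_le_coverNum {h : ℝ → ℝ} (hh : ContinuousOn h (Icc 0 1)) {δ : ℝ}
    (hδ0 : 0 < δ) (hδ1 : δ < 1) :
    ∑ i ∈ Finset.range ⌈1/δ⌉₊, (2 + osc h δ i / (2*δ)) ≤ 16 * (coverNum (G h) δ : ℝ) := by
  classical
  have h2δ : (0:ℝ) < 2*δ := by linarith
  set m := ⌈1/δ⌉₊ with hmdef
  have hmem : ∃ t : Finset (ℝ × ℝ), t.card = coverNum (G h) δ ∧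
      G h ⊆ ⋃ p ∈ t, Metric.closedBall p δ := Nat.sInf_mem (coverSet_nonempty hh hδ0 hδ1)
  obtain ⟨t, htc, hcov⟩ := hmem
  set P : ℕ → ℝ × ℝ → Prop := fun i p => ∃ x ∈ ecol δ i, dist (x, h x) p ≤ δ with hP
  set T : ℕ → Finset (ℝ × ℝ) := fun i => t.filter (P i) with hT
  have claim1 : ∀ i < m, 1 ≤ (T i).card := by
    intro i hi
    have hx : (i:ℝ)*δ ∈ ecol δ i := left_mem_ecol hδ0 hi
    have hxI : (i:ℝ)*δ ∈ Icc (0:ℝ) 1 := ecol_subset_unit hδ0 i hx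
    have hgr : ((i:ℝ)*δ, h ((i:ℝ)*δ)) ∈ G h := ⟨_, hxI, rfl⟩
    obtain ⟨p, hp, hd⟩ := Set.mem_iUnion₂.mp (hcov hgr)
    have hpT : p ∈ T i := Finset.mem_filter.mpr ⟨hp, ⟨_, hx, mem_closedBall.mp hd⟩⟩
    exact Finset.card_pos.mpr ⟨p, hpT⟩
  have claim2 : ∀ i < m, osc h δ i ≤ ((T i).card : ℝ) * (2*δ) := by
    intro i hi
    have hsubset : h '' ecol δ i ⊆ ⋃ p ∈ (T i), Icc (p.2 - δ) (p.2 + δ) := by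
      rintro y ⟨x, hx, rfl⟩
      have hxI := ecol_subset_unit hδ0 i hx
      obtain ⟨p, hp, hd⟩ := Set.mem_iUnion₂.mp (hcov ⟨x, hxI, rfl⟩)
      rw [mem_closedBall] at hd
      have hpT : p ∈ T i := Finset.mem_filter.mpr ⟨hp, ⟨x, hx, hd⟩⟩
      have hd2 : dist (h x) p.2 ≤ δ := by
        rw [Prod.dist_eq] at hd
        exact le_trans (le_max_right _ _) hd
      rw [Real.dist_eq, abs_le] at hd2
      refine Set.mem_iUnion₂.mpr ⟨p, hpT, ?_⟩
      constructor <;> linarith [hd2.1, hd2.2]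
    have hmeas := MeasureTheory.measure_biUnion_finset_le (μ := MeasureTheory.volume) (T i)
      (fun p => Icc (p.2 - δ) (p.2 + δ))
    have hIcc := image_ecol hh hδ0 hi
    rw [hIcc] at hsubset
    have h1 := le_trans (MeasureTheory.measure_mono hsubset) hmeas
    rw [Real.volume_Icc] at h1
    have h2 : ∀ p ∈ T i, MeasureTheory.volume (Icc (p.2 - δ) (p.2 + δ)) = ENNReal.ofReal (2*δ) := by
      intro p _
      rw [Real.volume_Icc]
      ring_nf
    rw [Finset.sum_congr rfl h2, Finset.sum_const, nsmul_eq_mul] at h1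
    have h3 : ENNReal.ofReal (osc h δ i) ≤ ENNReal.ofReal (((T i).card : ℝ) * (2*δ)) := by
      rw [ENNReal.ofReal_mul (Nat.cast_nonneg _ : (0:ℝ) ≤ ((T i).card:ℝ)), ENNReal.ofReal_natCast]
      exact h1
    rw [ENNReal.ofReal_le_ofReal_iff (mul_nonneg (Nat.cast_nonneg _) h2δ.le)] at h3
    exact h3
  have claim3 : ∑ i ∈ Finset.range m, (T i).card ≤ 4 * t.card := by
    have heq : ∑ i ∈ Finset.range m, (T i).card =
        ∑ p ∈ t, ((Finset.range m).filter (fun i => P i p)).card := by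
      simp only [hT, Finset.card_filter]
      rw [Finset.sum_comm]
    rw [heq]
    have hbound : ∀ p ∈ t, ((Finset.range m).filter (fun i => P i p)).card ≤ 4 := by
      intro p _
      by_cases hne : (((Finset.range m).filter (fun i => P i p))).Nonempty
      · obtain ⟨i₀, hi₀⟩ := hne
        obtain ⟨x₀, hx₀, hd₀⟩ := (Finset.mem_filter.mp hi₀).2
        have hc0 : 0 ≤ p.1 + δ := by
          have hdx : dist x₀ p.1 ≤ δ := by
            rw [Prod.dist_eq] at hd₀
            exact le_trans (le_max_left _ _) hd₀
          rw [Real.dist_eq, abs_le] at hdx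
          have hx0' : 0 ≤ x₀ := (ecol_subset_unit hδ0 i₀ hx₀).1
          linarith [hdx.1, hdx.2]
        set b₀ := ⌊(p.1 + δ)/δ⌋₊ with hb₀
        have hsub : ((Finset.range m).filter (fun i => P i p)) ⊆ Finset.Icc (b₀ - 3) b₀ := by
          intro i hi'
          obtain ⟨x, hx, hd⟩ := (Finset.mem_filter.mp hi').2
          have hdx : dist x p.1 ≤ δ := by
            rw [Prod.dist_eq] at hd
            exact le_trans (le_max_left _ _) hd
          rw [Real.dist_eq, abs_le] at hdx
          have hlo : (i:ℝ)*δ ≤ x := hx.1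
          have hhi : x ≤ ((i:ℝ)+1)*δ := le_trans hx.2 (min_le_left _ _)
          have hle : (i:ℝ) ≤ (p.1+δ)/δ := by
            rw [le_div_iff₀ hδ0]
            linarith [hdx.2]
          have h1 : i ≤ b₀ := Nat.le_floor hle
          have h2 : b₀ ≤ i + 3 := by
            have hfl : (b₀:ℝ) ≤ (p.1+δ)/δ := Nat.floor_le (by positivity)
            have h3 : (p.1+δ)/δ ≤ (i:ℝ)+3 := by
              rw [div_le_iff₀ hδ0]
              nlinarith [hdx.1]
            have h4 : (b₀:ℝ) ≤ ((i+3 : ℕ):ℝ) := by push_cast; linarith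
            exact_mod_cast h4
          exact Finset.mem_Icc.mpr ⟨by omega, h1⟩
        calc ((Finset.range m).filter (fun i => P i p)).card
            ≤ (Finset.Icc (b₀-3) b₀).card := Finset.card_le_card hsub
          _ ≤ 4 := by rw [Nat.card_Icc]; omega
      · rw [Finset.not_nonempty_iff_eq_empty] at hne
        rw [hne]
        simp
    calc ∑ p ∈ t, ((Finset.range m).filter (fun i => P i p)).card
        ≤ ∑ _p ∈ t, 4 := Finset.sum_le_sum hbound
      _ = 4 * t.card := by rw [Finset.sum_const, smul_eq_mul, Nat.mul_comm]
  have hfinal : ∑ i ∈ Finset.range m, (2 + osc h δ i/(2*δ)) ≤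
      ∑ i ∈ Finset.range m, (4*((T i).card:ℝ)) := by
    refine Finset.sum_le_sum fun i hi => ?_
    have hi' := Finset.mem_range.mp hi
    have c1' : (1:ℝ) ≤ ((T i).card:ℝ) := by exact_mod_cast claim1 i hi'
    have c2' : osc h δ i / (2*δ) ≤ ((T i).card:ℝ) := by
      rw [div_le_iff₀ h2δ]
      exact claim2 i hi'
    linarith
  have hsum : ∑ i ∈ Finset.range m, (4*((T i).card:ℝ)) ≤ 16 * (coverNum (G h) δ : ℝ) := by
    rw [← Finset.mul_sum]
    have : ((∑ i ∈ Finset.range m, (T i).card : ℕ):ℝ) ≤ ((4 * t.card : ℕ):ℝ) := by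
      exact_mod_cast claim3
    push_cast at this ⊢
    rw [htc] at this
    linarith
  linarith

lemma osc_add {f g : ℝ → ℝ} (hf : ContinuousOn f (Icc 0 1)) (hg : ContinuousOn g (Icc 0 1))
    {δ : ℝ} (hδ0 : 0 < δ) {i : ℕ} (hi : i < ⌈1/δ⌉₊) :
    osc (f + g) δ i ≤ osc f δ i + osc g δ i := by
  have hsub := ecol_subset_unit hδ0 i
  have hcompact : IsCompact (ecol δ i) := by unfold ecol; exact isCompact_Icc
  have hne : (ecol δ i).Nonempty := ⟨_, left_mem_ecol hδ0 hi⟩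
  have hfc : IsCompact (f '' ecol δ i) := hcompact.image_of_continuousOn (hf.mono hsub)
  have hgc : IsCompact (g '' ecol δ i) := hcompact.image_of_continuousOn (hg.mono hsub)
  have h1 : sSup ((f+g) '' ecol δ i) ≤ sSup (f '' ecol δ i) + sSup (g '' ecol δ i) := by
    apply csSup_le (hne.image _)
    rintro y ⟨x, hx, rfl⟩
    have h1 := le_csSup hfc.bddAbove (mem_image_of_mem f hx)
    have h2 := le_csSup hgc.bddAbove (mem_image_of_mem g hx)
    simp only [Pi.add_apply]
    linarith
  have h2 : sInf (f '' ecol δ i) + sInf (g '' ecol δ i) ≤ sInf ((f+g) '' ecol δ i) := by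
    apply le_csInf (hne.image _)
    rintro y ⟨x, hx, rfl⟩
    have h1 := csInf_le hfc.bddBelow (mem_image_of_mem f hx)
    have h2 := csInf_le hgc.bddBelow (mem_image_of_mem g hx)
    simp only [Pi.add_apply]
    linarith
  unfold osc
  linarith

/-- The key covering inequality. -/
lemma key {f g : ℝ → ℝ} (hf : ContinuousOn f (Icc 0 1)) (hg : ContinuousOn g (Icc 0 1))
    {δ : ℝ} (hδ0 : 0 < δ) (hδ1 : δ < 1) :
    (coverNum (G (f + g)) δ : ℝ) ≤
      32 * max (coverNum (G f) δ : ℝ) (coverNum (G g) δ : ℝ) := by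
  have hfg : ContinuousOn (f + g) (Icc 0 1) := hf.add hg
  have h1 := coverNum_le_sum hfg hδ0 hδ1
  have h2 : ∑ i ∈ Finset.range ⌈1/δ⌉₊, (2 + osc (f+g) δ i / (2*δ)) ≤
      (∑ i ∈ Finset.range ⌈1/δ⌉₊, (2 + osc f δ i / (2*δ)))
      + ∑ i ∈ Finset.range ⌈1/δ⌉₊, (2 + osc g δ i / (2*δ)) := by
    rw [← Finset.sum_add_distrib]
    apply Finset.sum_le_sum
    intro i hi
    have hoa := osc_add hf hg hδ0 (Finset.mem_range.mp hi)
    have h2δ : (0:ℝ) < 2*δ := by linarith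
    have hdiv : osc (f+g) δ i/(2*δ) ≤ (osc f δ i + osc g δ i)/(2*δ) := by gcongr
    rw [add_div] at hdiv
    linarith
  have h3f := sum_le_coverNum hf hδ0 hδ1
  have h3g := sum_le_coverNum hg hδ0 hδ1
  have hNf : (coverNum (G f) δ:ℝ) ≤ max (coverNum (G f) δ:ℝ) (coverNum (G g) δ:ℝ) :=
    le_max_left _ _
  have hNg : (coverNum (G g) δ:ℝ) ≤ max (coverNum (G f) δ:ℝ) (coverNum (G g) δ:ℝ) :=
    le_max_right _ _
  linarith

lemma coverNum_le_global {h : ℝ → ℝ} (hh : ContinuousOn h (Icc 0 1)) {δ : ℝ}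
    (hδ0 : 0 < δ) (hδ1 : δ < 1) :
    (coverNum (G h) δ : ℝ) ≤ (4 + (sSup (h '' Icc 0 1) - sInf (h '' Icc 0 1))) / δ^2 := by
  have hI : IsCompact (h '' Icc 0 1) := isCompact_Icc.image_of_continuousOn hh
  set C := sSup (h '' Icc 0 1) - sInf (h '' Icc 0 1) with hCdef
  have h0mem : (0:ℝ) ∈ Icc (0:ℝ) 1 := by norm_num
  have hC0 : 0 ≤ C := by
    have h1 := le_csSup hI.bddAbove (mem_image_of_mem h h0mem)
    have h2 := csInf_le hI.bddBelow (mem_image_of_mem h h0mem)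
    unfold C
    linarith
  have h2δ : (0:ℝ) < 2*δ := by linarith
  have hosc : ∀ i < ⌈1/δ⌉₊, osc h δ i ≤ C := by
    intro i hi
    have hsub := ecol_subset_unit hδ0 i
    have hne : (h '' ecol δ i).Nonempty := ⟨_, mem_image_of_mem h (left_mem_ecol hδ0 hi)⟩
    have h1 : sSup (h '' ecol δ i) ≤ sSup (h '' Icc 0 1) :=
      csSup_le_csSup hI.bddAbove hne (image_mono hsub)
    have h2 : sInf (h '' Icc 0 1) ≤ sInf (h '' ecol δ i) :=
      csInf_le_csInf hI.bddBelow hne (image_mono hsub)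
    unfold osc
    unfold C
    linarith
  have hm : (⌈1/δ⌉₊:ℝ) ≤ 2/δ := by
    have h1 : (⌈1/δ⌉₊:ℝ) < 1/δ + 1 := Nat.ceil_lt_add_one (by positivity)
    have h2 : (1:ℝ) ≤ 1/δ := by
      rw [le_div_iff₀ hδ0]
      linarith
    have h3 : (2:ℝ)/δ = 1/δ + 1/δ := by ring
    linarith
  calc (coverNum (G h) δ:ℝ)
      ≤ ∑ i ∈ Finset.range ⌈1/δ⌉₊, (2 + osc h δ i/(2*δ)) := coverNum_le_sum hh hδ0 hδ1
    _ ≤ ∑ _i ∈ Finset.range ⌈1/δ⌉₊, (2 + C/(2*δ)) := by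
        refine Finset.sum_le_sum fun i hi => ?_
        have := hosc i (Finset.mem_range.mp hi)
        gcongr
    _ = (⌈1/δ⌉₊:ℝ) * (2 + C/(2*δ)) := by
        rw [Finset.sum_const, nsmul_eq_mul, Finset.card_range]
    _ ≤ (2/δ) * (2 + C/(2*δ)) := by
        apply mul_le_mul_of_nonneg_right hm (by positivity)
    _ ≤ (4 + C)/δ^2 := by
        have e1 : (2/δ)*(2 + C/(2*δ)) = 4/δ + C/δ^2 := by
          field_simp
          ring
        have e2 : (4:ℝ)/δ ≤ 4/δ^2 := by
          rw [div_le_div_iff₀ (by positivity) (by positivity)]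
          nlinarith
        have e3 : (4 + C)/δ^2 = 4/δ^2 + C/δ^2 := by ring
        linarith

end BoxDimAux

theorem upperBoxDim_graph_add_le (f g : ℝ → ℝ)
    (hf : ContinuousOn f (Set.Icc 0 1)) (hg : ContinuousOn g (Set.Icc 0 1)) :
    upperBoxDim (G (f + g)) ≤ max (upperBoxDim (G f)) (upperBoxDim (G g)) := by
  classical
  open BoxDimAux in
  set l := nhdsWithin (0:ℝ) (Set.Ioi 0) with hldef
  have hlne : l.NeBot := by rw [hldef]; infer_instance
  have hev : ∀ᶠ δ in l, 0 < δ ∧ δ < 1/2 := by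
    have hIoo : Set.Ioo (0:ℝ) (1/2) ∈ l := by
      rw [hldef]
      exact Ioo_mem_nhdsGT_of_mem (by constructor <;> norm_num)
    filter_upwards [hIoo] with δ hδ using ⟨hδ.1, hδ.2⟩
  have hLtop : Tendsto (fun δ : ℝ => -Real.log δ) l atTop := by
    rw [hldef]
    exact tendsto_neg_atBot_atTop.comp Real.tendsto_log_nhdsGT_zero
  have hLpos : ∀ δ : ℝ, 0 < δ → δ < 1 → 0 < -Real.log δ := fun δ h0 h1 => by
    have := Real.log_neg h0 h1
    linarith
  -- boundedness above for any continuous h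
  have hbound : ∀ (h : ℝ → ℝ), ContinuousOn h (Set.Icc 0 1) →
      IsBoundedUnder (· ≤ ·) l (fun δ => Real.log (coverNum (G h) δ) / -Real.log δ) := by
    intro h hh
    set K := 4 + (sSup (h '' Set.Icc 0 1) - sInf (h '' Set.Icc 0 1)) with hKdef
    have hI : IsCompact (h '' Set.Icc 0 1) := isCompact_Icc.image_of_continuousOn hh
    have h0mem : (0:ℝ) ∈ Set.Icc (0:ℝ) 1 := by norm_num
    have hK4 : (4:ℝ) ≤ K := by
      have h1 := le_csSup hI.bddAbove (mem_image_of_mem h h0mem)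
      have h2 := csInf_le hI.bddBelow (mem_image_of_mem h h0mem)
      unfold K
      linarith
    refine ⟨Real.log K + 2, eventually_map.mpr ?_⟩
    have hev2 : ∀ᶠ δ in l, 1 ≤ -Real.log δ := hLtop.eventually_ge_atTop 1
    filter_upwards [hev, hev2] with δ hδ hL1
    obtain ⟨hδ0, hδ12⟩ := hδ
    have hδ1 : δ < 1 := by linarith
    have hN1 : 1 ≤ coverNum (G h) δ := one_le_coverNum hh hδ0 hδ1
    have hNpos : (0:ℝ) < (coverNum (G h) δ:ℝ) := by exact_mod_cast hN1
    have hglob := coverNum_le_global hh hδ0 hδ1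
    have hKpos : (0:ℝ) < K := by linarith
    have hlog : Real.log (coverNum (G h) δ) ≤ Real.log (K/δ^2) :=
      Real.log_le_log hNpos hglob
    have hlogK : Real.log (K/δ^2) = Real.log K + 2 * (-Real.log δ) := by
      rw [Real.log_div (ne_of_gt hKpos) (by positivity), Real.log_pow]
      push_cast
      ring
    have hL0 : (0:ℝ) < -Real.log δ := by linarith
    have hlogK0 : 0 ≤ Real.log K := Real.log_nonneg (by linarith)
    have hu1 : Real.log (coverNum (G h) δ) / -Real.log δ ≤
        (Real.log K + 2 * (-Real.log δ)) / -Real.log δ := by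
      gcongr
      linarith
    have heq : (Real.log K + 2 * (-Real.log δ)) / -Real.log δ =
        Real.log K / -Real.log δ + 2 := by
      rw [add_div, mul_div_assoc, div_self (ne_of_gt (by linarith : (0:ℝ) < -Real.log δ)), mul_one]
    have hfrac : Real.log K / -Real.log δ ≤ Real.log K := div_le_self hlogK0 hL1
    linarith
  have hboundf := hbound f hf
  have hboundg := hbound g hg
  -- coboundedness from below
  have hfg : ContinuousOn (f + g) (Set.Icc 0 1) := hf.add hg
  have hnonneg : ∀ᶠ δ in l, (0:ℝ) ≤ Real.log (coverNum (G (f+g)) δ) / -Real.log δ := by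
    filter_upwards [hev] with δ hδ
    obtain ⟨hδ0, hδ12⟩ := hδ
    have hδ1 : δ < 1 := by linarith
    have hN1 : 1 ≤ coverNum (G (f+g)) δ := one_le_coverNum hfg hδ0 hδ1
    exact div_nonneg (Real.log_nonneg (by exact_mod_cast hN1)) (hLpos δ hδ0 hδ1).le
  have hcobound : IsCoboundedUnder (· ≤ ·) l
      (fun δ => Real.log (coverNum (G (f+g)) δ) / -Real.log δ) := by
    have hne : (map (fun δ => Real.log (coverNum (G (f+g)) δ) / -Real.log δ) l).NeBot :=
      hlne.map _
    exact Filter.IsBounded.isCobounded_le ⟨0, eventually_map.mpr hnonneg⟩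
  -- main estimate
  have hmain : ∀ ε : ℝ, 0 < ε → upperBoxDim (G (f + g)) ≤
      max (upperBoxDim (G f)) (upperBoxDim (G g)) + ε := by
    intro ε hε
    have hDf : upperBoxDim (G f) =
        limsup (fun δ : ℝ => Real.log (coverNum (G f) δ) / -Real.log δ) l := rfl
    have hDg : upperBoxDim (G g) =
        limsup (fun δ : ℝ => Real.log (coverNum (G g) δ) / -Real.log δ) l := rfl
    have h1 : ∀ᶠ δ in l, Real.log (coverNum (G f) δ) / -Real.log δ <
        upperBoxDim (G f) + ε/3 :=
      eventually_lt_of_limsup_lt (by rw [← hDf]; linarith) hboundf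
    have h2 : ∀ᶠ δ in l, Real.log (coverNum (G g) δ) / -Real.log δ <
        upperBoxDim (G g) + ε/3 :=
      eventually_lt_of_limsup_lt (by rw [← hDg]; linarith) hboundg
    have h3 : ∀ᶠ δ in l, Real.log 32 / -Real.log δ ≤ ε/3 := by
      have hge := hLtop.eventually_ge_atTop (max 1 (Real.log 32 / (ε/3)))
      filter_upwards [hge] with δ hδ
      have hL1 : 1 ≤ -Real.log δ := le_trans (le_max_left _ _) hδ
      have hL2 : Real.log 32/(ε/3) ≤ -Real.log δ := le_trans (le_max_right _ _) hδ
      rw [div_le_iff₀ (by linarith)]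
      rw [div_le_iff₀ (by positivity)] at hL2
      nlinarith
    have hmev : ∀ᶠ δ in l, Real.log (coverNum (G (f+g)) δ) / -Real.log δ ≤
        max (upperBoxDim (G f)) (upperBoxDim (G g)) + ε := by
      filter_upwards [hev, h1, h2, h3] with δ hδ huf hug hlog32
      obtain ⟨hδ0, hδ12⟩ := hδ
      have hδ1 : δ < 1 := by linarith
      have hL0 : (0:ℝ) < -Real.log δ := hLpos δ hδ0 hδ1
      have hkey := key hf hg hδ0 hδ1
      have hNf1 : 1 ≤ coverNum (G f) δ := one_le_coverNum hf hδ0 hδ1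
      have hNg1 : 1 ≤ coverNum (G g) δ := one_le_coverNum hg hδ0 hδ1
      have hNfg1 : 1 ≤ coverNum (G (f+g)) δ := one_le_coverNum hfg hδ0 hδ1
      have hNfpos : (0:ℝ) < (coverNum (G f) δ:ℝ) := by exact_mod_cast hNf1
      have hNgpos : (0:ℝ) < (coverNum (G g) δ:ℝ) := by exact_mod_cast hNg1
      have hNfgpos : (0:ℝ) < (coverNum (G (f+g)) δ:ℝ) := by exact_mod_cast hNfg1
      have hmaxpos : (0:ℝ) < max ((coverNum (G f) δ:ℕ):ℝ) ((coverNum (G g) δ:ℕ):ℝ) :=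
        lt_max_of_lt_left hNfpos
      have hstep : Real.log (coverNum (G (f+g)) δ) ≤
          Real.log (32 * max ((coverNum (G f) δ:ℕ):ℝ) ((coverNum (G g) δ:ℕ):ℝ)) :=
        Real.log_le_log hNfgpos hkey
      rw [Real.log_mul (by norm_num) (ne_of_gt hmaxpos)] at hstep
      have hmaxlog : Real.log (max ((coverNum (G f) δ:ℕ):ℝ) ((coverNum (G g) δ:ℕ):ℝ)) ≤
          max (Real.log (coverNum (G f) δ)) (Real.log (coverNum (G g) δ)) := by
        rcases max_cases ((coverNum (G f) δ:ℕ):ℝ) ((coverNum (G g) δ:ℕ):ℝ) with ⟨hm, -⟩ | ⟨hm, -⟩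
        · rw [hm]; exact le_max_left _ _
        · rw [hm]; exact le_max_right _ _
      have hudiv : Real.log (coverNum (G (f+g)) δ) / -Real.log δ ≤
          (Real.log 32 + max (Real.log (coverNum (G f) δ)) (Real.log (coverNum (G g) δ)))
            / -Real.log δ := by
        gcongr
        linarith
      rw [add_div, ← max_div_div_right hL0.le] at hudiv
      have hm2 : max (Real.log (coverNum (G f) δ) / -Real.log δ)
          (Real.log (coverNum (G g) δ) / -Real.log δ) ≤
          max (upperBoxDim (G f)) (upperBoxDim (G g)) + ε/3 := by
        apply max_le
        · exact le_trans huf.le (by have := le_max_left (upperBoxDim (G f)) (upperBoxDim (G g)); linarith)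
        · exact le_trans hug.le (by have := le_max_right (upperBoxDim (G f)) (upperBoxDim (G g)); linarith)
      linarith
    exact limsup_le_of_le hcobound hmev
  exact le_of_forall_pos_le_add hmain
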